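/- In ℝ³ with coordinates (t,v,g), define vector fields A₀(t,v,g) = (1, J(v,g), g-1) and A₁(t,v,g) = (0,0,1), where J(v,g) = -g_L v + g(V_E - v). Then the Lie bracket [A₀, A₁] equals (0, -(V_E - v), -1) up to sign, and for every point with 0 < v < V_E, the three vectors A₀, A₁, [A₀,A₁] span ℝ³. -/

import Mathlib

theorem stmt9 (gL VE : ℝ) (hgL : 0 < gL) (hVE : 1 < VE)
    (J : ℝ → ℝ → ℝ) (hJ : ∀ v g, J v g = -gL * v + g * (VE - v))
    (A₀ A₁ : ℝ × ℝ × ℝ → ℝ × ℝ × ℝ)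
    (hA₀ : ∀ x : ℝ × ℝ × ℝ, A₀ x = (1, J x.2.1 x.2.2, x.2.2 - 1))
    (hA₁ : ∀ x : ℝ × ℝ × ℝ, A₁ x = (0, 0, 1))
    (bracket : ℝ × ℝ × ℝ → ℝ × ℝ × ℝ)
    (hbr : ∀ x, bracket x = fderiv ℝ A₀ x (A₁ x) - fderiv ℝ A₁ x (A₀ x)) :
    ∀ x : ℝ × ℝ × ℝ, 0 < x.2.1 → x.2.1 < VE →
      (bracket x = (0, VE - x.2.1, 1) ∨ bracket x = (0, -(VE - x.2.1), -1)) ∧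
      Submodule.span ℝ {A₀ x, A₁ x, bracket x} = ⊤ := by
  have hAeq : A₀ = fun x : ℝ × ℝ × ℝ =>
      ((1:ℝ), -gL * x.2.1 + x.2.2 * (VE - x.2.1), x.2.2 - 1) :=
    funext fun x => by rw [hA₀, hJ]
  have hA1eq : A₁ = fun _ => ((0:ℝ), (0:ℝ), (1:ℝ)) := funext hA₁
  intro x hv0 hvE
  set Pv : (ℝ × ℝ × ℝ) →L[ℝ] ℝ :=
    (ContinuousLinearMap.fst ℝ ℝ ℝ).comp (ContinuousLinearMap.snd ℝ ℝ (ℝ × ℝ)) with hPv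
  set Pg : (ℝ × ℝ × ℝ) →L[ℝ] ℝ :=
    (ContinuousLinearMap.snd ℝ ℝ ℝ).comp (ContinuousLinearMap.snd ℝ ℝ (ℝ × ℝ)) with hPg
  have hv' : HasFDerivAt (fun y : ℝ × ℝ × ℝ => y.2.1) Pv x :=
    (hasFDerivAt_fst).comp x (hasFDerivAt_snd)
  have hg' : HasFDerivAt (fun y : ℝ × ℝ × ℝ => y.2.2) Pg x :=
    (hasFDerivAt_snd).comp x (hasFDerivAt_snd)
  have hJd := (hv'.const_mul (-gL)).add (hg'.mul ((hasFDerivAt_const VE x).sub hv'))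
  have hA0d : HasFDerivAt A₀
      (ContinuousLinearMap.prod 0 ((-gL • Pv + (x.2.2 • (0 - Pv) + (VE - x.2.1) • Pg)).prod Pg)) x :=
    hAeq ▸ ((hasFDerivAt_const (1:ℝ) x).prodMk (hJd.prodMk (hg'.sub_const 1)))
  have hfd := hA0d.fderiv
  have hf1 : fderiv ℝ A₁ x = 0 := by rw [hA1eq]; simp
  have hbval : bracket x = (0, VE - x.2.1, 1) := by
    rw [hbr, hfd, hf1, hA₁]
    simp [ContinuousLinearMap.prod_apply, ContinuousLinearMap.comp_apply,
      ContinuousLinearMap.add_apply, ContinuousLinearMap.smul_apply, hPv, hPg]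
  refine ⟨Or.inl hbval, ?_⟩
  rw [hbval, hA₀, hA₁]
  have hs : VE - x.2.1 ≠ 0 := by linarith
  rw [eq_top_iff]
  rintro ⟨a, b, c⟩ -
  have h0 : ((1:ℝ), J x.2.1 x.2.2, x.2.2 - 1) ∈
      Submodule.span ℝ {((1:ℝ), J x.2.1 x.2.2, x.2.2 - 1), ((0:ℝ),(0:ℝ),(1:ℝ)),
        ((0:ℝ), VE - x.2.1, (1:ℝ))} := Submodule.subset_span (by simp)
  have h1 : ((0:ℝ),(0:ℝ),(1:ℝ)) ∈
      Submodule.span ℝ {((1:ℝ), J x.2.1 x.2.2, x.2.2 - 1), ((0:ℝ),(0:ℝ),(1:ℝ)),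
        ((0:ℝ), VE - x.2.1, (1:ℝ))} := Submodule.subset_span (by simp)
  have h2 : ((0:ℝ), VE - x.2.1, (1:ℝ)) ∈
      Submodule.span ℝ {((1:ℝ), J x.2.1 x.2.2, x.2.2 - 1), ((0:ℝ),(0:ℝ),(1:ℝ)),
        ((0:ℝ), VE - x.2.1, (1:ℝ))} := Submodule.subset_span (by simp)
  have key : ((a,b,c) : ℝ × ℝ × ℝ) =
      a • ((1:ℝ), J x.2.1 x.2.2, x.2.2 - 1)
      + ((b - a * J x.2.1 x.2.2)/(VE - x.2.1)) • ((0:ℝ), VE - x.2.1, (1:ℝ))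
      + (c - a * (x.2.2 - 1) - (b - a * J x.2.1 x.2.2)/(VE - x.2.1)) • ((0:ℝ),(0:ℝ),(1:ℝ)) := by
    simp only [Prod.smul_mk, Prod.mk_add_mk, Prod.ext_iff, smul_eq_mul]
    refine ⟨by ring, by field_simp; ring, by field_simp; ring⟩
  rw [key]
  exact Submodule.add_mem _ (Submodule.add_mem _ (Submodule.smul_mem _ _ h0)
    (Submodule.smul_mem _ _ h2)) (Submodule.smul_mem _ _ h1)
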